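/- For any partition ν of n into at most N parts and any standard tableau T of shape ν with contents c_1,...,c_n, the element Z_ν(u) of U(g)(u) obtained as the trace (tr^{⊗n} ⊗ id)(F_T(u)) is invariant under the adjoint action of the classical group G on U(g); that is, Z_ν(u) takes values in the ring Z(g) of G-invariants. -/

import Mathlib

set_option synthInstance.maxHeartbeats 1000000
set_option maxHeartbeats 1000000

open MonoidAlgebra Matrix

attribute [local instance 100] LieRing.ofAssociativeRing

/-! Classical Lie algebras `so_N`, `sp_N` inside `gl_N`, basis indexed by a
negation-closed finite set `s ⊂ ℤ`. -/

/-- `F_{ij} = E_{ij} - ε_{ij} E_{-j,-i}`. -/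
noncomputable def Fbasis (s : Finset ℤ) (hneg : ∀ i ∈ s, -i ∈ s) (ε : ℤ → ℂ)
    (i j : ↥s) : Matrix ↥s ↥s ℂ :=
  Matrix.single i j 1 -
    (ε i * ε j) • Matrix.single ⟨-(j : ℤ), hneg _ j.2⟩ ⟨-(i : ℤ), hneg _ i.2⟩ 1

/-- The Lie subalgebra `g ⊂ gl_N` spanned by the `F_{ij}`. -/
noncomputable def gClassical (s : Finset ℤ) (hneg : ∀ i ∈ s, -i ∈ s) (ε : ℤ → ℂ) :
    LieSubalgebra ℂ (Matrix ↥s ↥s ℂ) :=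
  LieSubalgebra.lieSpan ℂ _ (Set.range fun p : ↥s × ↥s => Fbasis s hneg ε p.1 p.2)

/-- The universal enveloping algebra `U(g)`. -/
noncomputable abbrev Ucl (s : Finset ℤ) (hneg : ∀ i ∈ s, -i ∈ s) (ε : ℤ → ℂ) : Type :=
  UniversalEnvelopingAlgebra ℂ ↥(gClassical s hneg ε)

/-- The generator `F_{ij} ∈ U(g)`. -/
noncomputable def Fgen (s : Finset ℤ) (hneg : ∀ i ∈ s, -i ∈ s) (ε : ℤ → ℂ)
    (i j : ↥s) : Ucl s hneg ε :=
  UniversalEnvelopingAlgebra.ι ℂ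
    ⟨Fbasis s hneg ε i j, LieSubalgebra.subset_lieSpan ⟨(i, j), rfl⟩⟩

/-- The `G`-invariant bilinear form: `J_{ij} = ⟨e_i, e_j⟩ = δ_{i,-j}` (orthogonal)
or `δ_{i,-j}·sgn i` (symplectic). -/
noncomputable def Jform (s : Finset ℤ) (ε : ℤ → ℂ) : Matrix ↥s ↥s ℂ :=
  fun i j => if (j : ℤ) = -(i : ℤ) then ε (i : ℤ) else 0

/-! Standard tableaux and Young projectors. -/

/-- A standard tableau with `n` boxes. -/
structure StdTableau (n : ℕ) where
  pos : Fin n → ℕ × ℕ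
  inj : Function.Injective pos
  lowerSet : ∀ p : Fin n, ∀ i j : ℕ, i ≤ (pos p).1 → j ≤ (pos p).2 →
    ∃ q : Fin n, pos q = (i, j)
  rowInc : ∀ p q : Fin n, (pos p).1 = (pos q).1 → (pos p).2 < (pos q).2 → p < q
  colInc : ∀ p q : Fin n, (pos p).2 = (pos q).2 → (pos p).1 < (pos q).1 → p < q

/-- The content `c_p` of the box of `T` occupied by `p`. -/
def StdTableau.content {n : ℕ} (T : StdTableau n) (p : Fin n) : ℤ :=
  ((T.pos p).2 : ℤ) - ((T.pos p).1 : ℤ)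

/-- The Young symmetrizer of the restriction of `T` to the entries `1,…,p`. -/
noncomputable def StdTableau.symmetrizer {n : ℕ} (T : StdTableau n) (p : Fin n) :
    MonoidAlgebra ℂ (Equiv.Perm (Fin n)) :=
  (∑ σ ∈ Finset.univ.filter (fun σ : Equiv.Perm (Fin n) =>
      (∀ q, p < q → σ q = q) ∧ ∀ q, (T.pos (σ q)).2 = (T.pos q).2),
    ((Equiv.Perm.sign σ : ℤ) : ℂ) • MonoidAlgebra.of ℂ (Equiv.Perm (Fin n)) σ) *
  (∑ σ ∈ Finset.univ.filter (fun σ : Equiv.Perm (Fin n) =>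
      (∀ q, p < q → σ q = q) ∧ ∀ q, (T.pos (σ q)).1 = (T.pos q).1),
    MonoidAlgebra.of ℂ (Equiv.Perm (Fin n)) σ)

/-- `w` is a Young basis vector for the standard tableau `T` (see `stmt_3`). -/
def IsYoungVector {n : ℕ} (T : StdTableau n) {W : Type} [AddCommGroup W] [Module ℂ W]
    (ρ : Representation ℂ (Equiv.Perm (Fin n)) W) (w : W) : Prop :=
  w ≠ 0 ∧ ∀ p : Fin n, ∃ f : MonoidAlgebra ℂ (Equiv.Perm (Fin n)) →ₗ[ℂ] W,
    (∀ σ : Equiv.Perm (Fin n), (∀ q, p < q → σ q = q) →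
      ∀ x, f (MonoidAlgebra.of ℂ (Equiv.Perm (Fin n)) σ * x) = ρ σ (f x)) ∧
    w ∈ Submodule.span ℂ {x : W | ∃ σ : Equiv.Perm (Fin n),
      (∀ q, p < q → σ q = q) ∧ x = ρ σ (f (T.symmetrizer p))}

/-- The matrix of `σ ∈ S_n` permuting the tensor factors of `(ℂ^N)^{⊗n}`. -/
noncomputable def permTensorMatrix (s : Finset ℤ) (n : ℕ) (σ : Equiv.Perm (Fin n)) :
    Matrix (Fin n → ↥s) (Fin n → ↥s) ℂ :=
  fun a b => if b = a ∘ σ then 1 else 0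

/-- The Young projector `Y_T` on `(ℂ^N)^{⊗n}`, the image of the normalized diagonal
matrix element `Φ_T` of `W_ν` under the permutational action. -/
noncomputable def youngProjector (s : Finset ℤ) (n : ℕ)
    {W : Type} [NormedAddCommGroup W] [InnerProductSpace ℂ W] [FiniteDimensional ℂ W]
    (ρ : Representation ℂ (Equiv.Perm (Fin n)) W) (w : W) :
    Matrix (Fin n → ↥s) (Fin n → ↥s) ℂ :=
  ((Module.finrank ℂ W : ℂ) / (n.factorial : ℂ)) •
    ∑ σ : Equiv.Perm (Fin n), (inner ℂ w (ρ σ w) : ℂ) • permTensorMatrix s n σ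

/-! The element `F_T(u)` and the function `Z_ν(u)`. -/

/-- `Q_{qp} ⊗ 1`: the operator `Q` acting in the tensor positions `q, p`. -/
noncomputable def Qpos (s : Finset ℤ) (hneg : ∀ i ∈ s, -i ∈ s) (ε : ℤ → ℂ)
    (n : ℕ) (q p : Fin n) :
    Matrix (Fin n → ↥s) (Fin n → ↥s) (Ucl s hneg ε) :=
  fun a b =>
    if (∀ r, r ≠ q → r ≠ p → a r = b r) ∧
        ((a p : ℤ) = -((a q : ℤ))) ∧ ((b p : ℤ) = -((b q : ℤ))) then
      algebraMap ℂ _ (ε (a q) * ε (b q))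
    else 0

/-- `F_p(v)`: the element `F(v) = -v - η + Σ E_{ij} ⊗ F_{ji}` acting in the `p`-th
tensor position, as a matrix with entries in `U(g)`. -/
noncomputable def Fpos (s : Finset ℤ) (hneg : ∀ i ∈ s, -i ∈ s) (ε : ℤ → ℂ)
    (η : ℂ) (n : ℕ) (p : Fin n) (v : ℂ) :
    Matrix (Fin n → ↥s) (Fin n → ↥s) (Ucl s hneg ε) :=
  fun a b =>
    if ∀ r, r ≠ p → a r = b r then
      Fgen s hneg ε (b p) (a p) -
        if a p = b p then algebraMap ℂ _ (v + η) else 0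
    else 0

/-- The element `F_T(u)` of `End(ℂ^N)^{⊗n} ⊗ U(g)`. -/
noncomputable def FT (s : Finset ℤ) (hneg : ∀ i ∈ s, -i ∈ s) (ε : ℤ → ℂ) (η : ℂ)
    (n : ℕ) (T : StdTableau n)
    {W : Type} [NormedAddCommGroup W] [InnerProductSpace ℂ W] [FiniteDimensional ℂ W]
    (ρ : Representation ℂ (Equiv.Perm (Fin n)) W) (w : W) (u : ℂ) :
    Matrix (Fin n → ↥s) (Fin n → ↥s) (Ucl s hneg ε) :=
  (youngProjector s n ρ w).map (algebraMap ℂ (Ucl s hneg ε)) *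
    ((List.finRange n).map (fun p =>
      ((1 : Matrix (Fin n → ↥s) (Fin n → ↥s) (Ucl s hneg ε)) +
          (2 * u + (T.content p : ℂ))⁻¹ •
            ∑ q ∈ Finset.univ.filter (fun q => q < p), Qpos s hneg ε n q p) *
        Fpos s hneg ε η n p (u + (T.content p : ℂ)))).prod

/-- `Z_ν(u) = (tr^{⊗n} ⊗ id)(F_T(u)) ∈ U(g)`. -/
noncomputable def Znu (s : Finset ℤ) (hneg : ∀ i ∈ s, -i ∈ s) (ε : ℤ → ℂ) (η : ℂ)
    (n : ℕ) (T : StdTableau n)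
    {W : Type} [NormedAddCommGroup W] [InnerProductSpace ℂ W] [FiniteDimensional ℂ W]
    (ρ : Representation ℂ (Equiv.Perm (Fin n)) W) (w : W) (u : ℂ) :
    Ucl s hneg ε :=
  Matrix.trace (FT s hneg ε η n T ρ w u)

set_option linter.unusedSectionVars false

namespace ZAux

variable {s : Finset ℤ}

/-- negation on the index set -/
def nI (hneg : ∀ i ∈ s, -i ∈ s) (k : ↥s) : ↥s := ⟨-(k : ℤ), hneg _ k.2⟩

@[simp] lemma nI_coe (hneg : ∀ i ∈ s, -i ∈ s) (k : ↥s) :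
    ((nI hneg k : ↥s) : ℤ) = -(k : ℤ) := rfl

@[simp] lemma nI_nI (hneg : ∀ i ∈ s, -i ∈ s) (k : ↥s) :
    nI hneg (nI hneg k) = k := Subtype.ext (by simp)

lemma sum_delta {M : Type*} [AddCommMonoid M] (hneg : ∀ i ∈ s, -i ∈ s) (k : ↥s) (f : ↥s → M) :
    ∑ l : ↥s, (if (l : ℤ) = -(k : ℤ) then f l else 0) = f (nI hneg k) := by
  rw [show (fun l : ↥s => if (l : ℤ) = -(k : ℤ) then f l else 0)
      = fun l => if l = nI hneg k then f l else 0 from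
    funext fun l => if_congr (by simp [Subtype.ext_iff, nI]) rfl rfl]
  simp [Finset.sum_ite_eq']

section gfacts
variable {ε : ℤ → ℂ} {δ : ℂ} {g : Matrix ↥s ↥s ℂ}
variable (hneg : ∀ i ∈ s, -i ∈ s) (hδ2 : δ * δ = 1)
  (hδε : ∀ i ∈ s, ε i * ε (-i) = δ) (hg : gᵀ * Jform s ε * g = Jform s ε)

include hneg hδε in
lemma J_mul_J : Jform s ε * Jform s ε = δ • (1 : Matrix ↥s ↥s ℂ) := by
  ext i k
  rw [Matrix.mul_apply]
  have h : ∀ l : ↥s, Jform s ε i l * Jform s ε l k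
      = if (l : ℤ) = -(i : ℤ) then (ε (i : ℤ) * if (k : ℤ) = -(l : ℤ) then ε (l : ℤ) else 0) else 0 := by
    intro l; simp only [Jform]; split_ifs <;> simp
  rw [Finset.sum_congr rfl fun l _ => h l, sum_delta hneg]
  simp only [nI_coe, neg_neg, Matrix.smul_apply, Matrix.one_apply, smul_ite, smul_eq_mul,
    mul_one, smul_zero]
  by_cases h : (k : ℤ) = (i : ℤ)
  · have hk : k = i := Subtype.ext h
    subst hk
    simp only [h, eq_self_iff_true, if_true, if_pos trivial]
    simpa using hδε _ k.2
  · have h' : ¬ (i = k) := fun hc => h (by rw [hc])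
    simp [h, h']

include hneg hδ2 hδε hg

omit hδ2 hg in
lemma left_inv_g_dummy : True := trivial

lemma left_inv_g : (δ • (Jform s ε * gᵀ * Jform s ε)) * g = 1 := by
  have h1 : Jform s ε * gᵀ * Jform s ε * g = δ • 1 := by
    calc Jform s ε * gᵀ * Jform s ε * g = Jform s ε * (gᵀ * Jform s ε * g) := by
          simp only [Matrix.mul_assoc]
      _ = Jform s ε * Jform s ε := by rw [hg]
      _ = δ • 1 := J_mul_J hneg hδε
  rw [Matrix.smul_mul, h1, smul_smul, hδ2, one_smul]

lemma ginv_eq : g⁻¹ = δ • (Jform s ε * gᵀ * Jform s ε) :=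
  Matrix.inv_eq_left_inv (left_inv_g hneg hδ2 hδε hg)

lemma ginv_mul : g⁻¹ * g = 1 := by
  rw [ginv_eq hneg hδ2 hδε hg]; exact left_inv_g hneg hδ2 hδε hg

lemma mul_ginv : g * g⁻¹ = 1 :=
  mul_eq_one_comm.mpr (ginv_mul hneg hδ2 hδε hg)

lemma gJgT : g * Jform s ε * gᵀ = Jform s ε := by
  have h1 : g * (δ • (Jform s ε * gᵀ * Jform s ε)) = 1 := by
    rw [← ginv_eq hneg hδ2 hδε hg]; exact mul_ginv hneg hδ2 hδε hg
  have h2 : g * (δ • (Jform s ε * gᵀ * Jform s ε)) * (δ • Jform s ε)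
      = δ • Jform s ε := by rw [h1, Matrix.one_mul]
  have h3 : g * (δ • (Jform s ε * gᵀ * Jform s ε)) * (δ • Jform s ε)
      = (δ * δ) • (g * Jform s ε * gᵀ * (Jform s ε * Jform s ε)) := by
    rw [Matrix.mul_smul, Matrix.mul_smul, Matrix.smul_mul, smul_smul]
    simp only [Matrix.mul_assoc]
  rw [h3, hδ2, one_smul, J_mul_J hneg hδε, Matrix.mul_smul, Matrix.mul_one] at h2
  have h4 := congrArg (fun M => δ • M) h2
  simpa [smul_smul, hδ2] using h4

lemma ginv_entry (i j : ↥s) :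
    g⁻¹ i j = δ * (ε (i : ℤ) * ε (-(j : ℤ))) * g (nI hneg j) (nI hneg i) := by
  rw [ginv_eq hneg hδ2 hδε hg]
  have h1 : (Jform s ε * gᵀ * Jform s ε) i j
      = ε (i : ℤ) * g (nI hneg j) (nI hneg i) * ε (-(j : ℤ)) := by
    rw [Matrix.mul_apply]
    have h : ∀ l : ↥s, (Jform s ε * gᵀ) i l * Jform s ε l j
        = if (l : ℤ) = -(j : ℤ) then (Jform s ε * gᵀ) i l * ε (l : ℤ) else 0 := by
      intro l
      simp only [Jform]
      rw [mul_ite, mul_zero]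
      exact if_congr (by omega) rfl rfl
    rw [Finset.sum_congr rfl fun l _ => h l, sum_delta hneg]
    congr 1
    rw [Matrix.mul_apply]
    have h' : ∀ l : ↥s, Jform s ε i l * gᵀ l (nI hneg j)
        = if (l : ℤ) = -(i : ℤ) then ε (i : ℤ) * g (nI hneg j) l else 0 := by
      intro l; simp only [Jform, Matrix.transpose_apply]; split_ifs <;> simp
    rw [Finset.sum_congr rfl fun l _ => h' l, sum_delta hneg]
  rw [Matrix.smul_apply, h1, smul_eq_mul]
  ring

lemma sumJ1 (e f : ↥s) :
    ∑ k : ↥s, ε (k : ℤ) * g k e * g (nI hneg k) f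
      = if (f : ℤ) = -(e : ℤ) then ε (e : ℤ) else 0 := by
  have h0 : gᵀ * (Jform s ε * g) = Jform s ε := by
    rw [← Matrix.mul_assoc]; exact hg
  have h1 := congrFun (congrFun h0 e) f
  rw [Matrix.mul_apply] at h1
  have h2 : ∀ k : ↥s, gᵀ e k * (Jform s ε * g) k f
      = ε (k : ℤ) * g k e * g (nI hneg k) f := by
    intro k
    rw [Matrix.mul_apply]
    have h : ∀ l : ↥s, Jform s ε k l * g l f
        = if (l : ℤ) = -(k : ℤ) then ε (k : ℤ) * g l f else 0 := by
      intro l; simp only [Jform]; split_ifs <;> simp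
    rw [Finset.sum_congr rfl fun l _ => h l, sum_delta hneg,
      Matrix.transpose_apply]
    ring
  rw [Finset.sum_congr rfl fun k _ => h2 k] at h1
  rw [h1]; rfl

lemma sumJ2 (a b : ↥s) :
    ∑ k : ↥s, g a k * ε (k : ℤ) * g b (nI hneg k)
      = if (b : ℤ) = -(a : ℤ) then ε (a : ℤ) else 0 := by
  have h0 : g * (Jform s ε * gᵀ) = Jform s ε := by
    rw [← Matrix.mul_assoc]; exact gJgT hneg hδ2 hδε hg
  have h1 := congrFun (congrFun h0 a) b
  rw [Matrix.mul_apply] at h1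
  have h2 : ∀ k : ↥s, g a k * (Jform s ε * gᵀ) k b
      = g a k * ε (k : ℤ) * g b (nI hneg k) := by
    intro k
    rw [Matrix.mul_apply]
    have h : ∀ l : ↥s, Jform s ε k l * gᵀ l b
        = if (l : ℤ) = -(k : ℤ) then ε (k : ℤ) * g b l else 0 := by
      intro l; simp only [Jform, Matrix.transpose_apply]; split_ifs <;> simp
    rw [Finset.sum_congr rfl fun l _ => h l, sum_delta hneg]
    ring
  rw [Finset.sum_congr rfl fun k _ => h2 k] at h1
  rw [h1]; rfl

end gfacts

section core
variable {ε : ℤ → ℂ} {δ : ℂ} {g : Matrix ↥s ↥s ℂ}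
variable (hneg : ∀ i ∈ s, -i ∈ s) (hδ2 : δ * δ = 1)
  (hδε : ∀ i ∈ s, ε i * ε (-i) = δ) (hg : gᵀ * Jform s ε * g = Jform s ε)

/-- The basis element `F_{ij}` as an element of the Lie subalgebra. -/
noncomputable def FgenElt (hneg : ∀ i ∈ s, -i ∈ s) (ε : ℤ → ℂ) (i j : ↥s) :
    ↥(gClassical s hneg ε) :=
  ⟨Fbasis s hneg ε i j, LieSubalgebra.subset_lieSpan ⟨(i, j), rfl⟩⟩

lemma fbasis_entry (i j z w : ↥s) :
    Fbasis s hneg ε i j z w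
      = (if i = z ∧ j = w then 1 else 0)
        - ε (i : ℤ) * ε (j : ℤ) * (if nI hneg j = z ∧ nI hneg i = w then 1 else 0) := by
  show Matrix.single i j (1:ℂ) z w
      - ((ε (i:ℤ) * ε (j:ℤ)) • Matrix.single (nI hneg j) (nI hneg i) (1:ℂ)) z w = _
  simp [Matrix.single, mul_ite]

lemma mul_std_mul (A B : Matrix ↥s ↥s ℂ) (i j z w : ↥s) :
    (A * Matrix.single i j (1:ℂ) * B) z w = A z i * B j w := by
  rw [Matrix.mul_apply]
  have h : ∀ d, (A * Matrix.single i j (1:ℂ)) z d * B d w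
      = if d = j then A z i * B d w else 0 := by
    intro d
    by_cases hd : d = j
    · subst hd; simp
    · simp [hd]
  rw [Finset.sum_congr rfl fun d _ => h d, Finset.sum_ite_eq' Finset.univ j
    (fun d => A z i * B d w)]
  simp

lemma ite_and_eq {P Q : Prop} [Decidable P] [Decidable Q] (a : ℂ) :
    (if P ∧ Q then a else 0) = (if P then 1 else 0) * (if Q then a else 0) := by
  split_ifs <;> simp_all

include hneg hδ2 hδε hg in
lemma core_matrix (x y : ↥s) :
    ∑ c : ↥s, g x c • (g * Fbasis s hneg ε y c * g⁻¹)
      = ∑ c : ↥s, g c y • Fbasis s hneg ε c x := by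
  have hgg : ∀ w' : ↥s, (∑ c : ↥s, g x c * g⁻¹ c w') = if x = w' then 1 else 0 := by
    intro w'
    have h := congrFun (congrFun (mul_ginv hneg hδ2 hδε hg) x) w'
    rw [Matrix.mul_apply] at h
    rw [h, Matrix.one_apply]
  ext z w
  simp only [Matrix.sum_apply, Matrix.smul_apply, smul_eq_mul]
  have hLterm : ∀ c : ↥s, g x c * (g * Fbasis s hneg ε y c * g⁻¹) z w
      = (g x c * g⁻¹ c w) * (g z y)
        - (g x c * ε (c : ℤ) * g z (nI hneg c)) * (ε (y : ℤ) * g⁻¹ (nI hneg y) w) := by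
    intro c
    have h : (g * Fbasis s hneg ε y c * g⁻¹) z w
        = g z y * g⁻¹ c w - ε (y:ℤ) * ε (c:ℤ) * (g z (nI hneg c) * g⁻¹ (nI hneg y) w) := by
      show (g * (Matrix.single y c (1:ℂ)
          - (ε (y:ℤ) * ε (c:ℤ)) • Matrix.single (nI hneg c) (nI hneg y) (1:ℂ)) * g⁻¹) z w = _
      rw [Matrix.mul_sub, Matrix.sub_mul, Matrix.sub_apply, Matrix.mul_smul, Matrix.smul_mul,
        Matrix.smul_apply, mul_std_mul, mul_std_mul]
      simp only [smul_eq_mul]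
      try ring
    rw [h]; ring
  have hRterm : ∀ c : ↥s, g c y * Fbasis s hneg ε c x z w
      = (if c = z then 1 else 0) * ((if x = w then 1 else 0) * g z y)
        - (if c = nI hneg w then 1 else 0) *
            ((if nI hneg x = z then 1 else 0) * (ε (-(w:ℤ)) * ε (x:ℤ) * g (nI hneg w) y)) := by
    intro c
    rw [fbasis_entry]
    have hcw : (nI hneg c = w) ↔ (c = nI hneg w) := by
      constructor
      · intro h; rw [← h, nI_nI]
      · intro h; rw [h, nI_nI]
    simp only [hcw]
    rw [ite_and_eq, ite_and_eq]
    by_cases h1 : c = z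
    · subst h1
      by_cases h2 : c = nI hneg w
      · rw [h2]
        simp
        all_goals (split_ifs <;> ring)
      · simp [h2]
        all_goals (split_ifs <;> ring)
    · by_cases h2 : c = nI hneg w
      · subst h2
        simp [h1]
        all_goals (split_ifs <;> ring)
      · simp [h1, h2]
        all_goals (split_ifs <;> ring)
  rw [Finset.sum_congr rfl fun c _ => hLterm c, Finset.sum_sub_distrib,
    ← Finset.sum_mul, ← Finset.sum_mul, hgg w, sumJ2 hneg hδ2 hδε hg x z,
    Finset.sum_congr rfl fun c _ => hRterm c, Finset.sum_sub_distrib]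
  simp only [ite_mul, one_mul, zero_mul, Finset.sum_ite_eq', Finset.mem_univ, if_true]
  congr 1
  rw [ginv_entry hneg hδ2 hδε hg (nI hneg y) w, nI_nI]
  by_cases hc : nI hneg x = z
  · have hc' : (z:ℤ) = -(x:ℤ) := by rw [← hc]; rfl
    rw [if_pos hc', if_pos hc]
    simp only [nI_coe, one_mul]
    linear_combination (ε (x:ℤ) * ε (-(w:ℤ)) * g (nI hneg w) y * δ) * hδε (y:ℤ) y.2
      + (ε (x:ℤ) * ε (-(w:ℤ)) * g (nI hneg w) y) * hδ2
  · have hc' : ¬ ((z:ℤ) = -(x:ℤ)) := fun h => hc (Subtype.ext h.symm)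
    rw [if_neg hc', if_neg hc]
    all_goals simp

end core

section tensor
variable {ε : ℤ → ℂ} {δ : ℂ} {g : Matrix ↥s ↥s ℂ}
variable (hneg : ∀ i ∈ s, -i ∈ s) (hδ2 : δ * δ = 1)
  (hδε : ∀ i ∈ s, ε i * ε (-i) = δ) (hg : gᵀ * Jform s ε * g = Jform s ε)
variable (θ : ↥(gClassical s hneg ε) →ₗ⁅ℂ⁆ ↥(gClassical s hneg ε))
variable (hθ : ∀ X : ↥(gClassical s hneg ε),
      ((θ X : Matrix ↥s ↥s ℂ)) = g * (X : Matrix ↥s ↥s ℂ) * g⁻¹)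

include hneg hδ2 hδε hg hθ in
lemma core_sub (x y : ↥s) :
    (∑ c : ↥s, g x c • θ (FgenElt hneg ε y c)) = ∑ c : ↥s, g c y • FgenElt hneg ε c x := by
  have hmat := core_matrix hneg hδ2 hδε hg x y
  apply Subtype.ext
  have h1 : ((∑ c : ↥s, g x c • θ (FgenElt hneg ε y c) : ↥(gClassical s hneg ε)) :
      Matrix ↥s ↥s ℂ) = ∑ c : ↥s, g x c • ((θ (FgenElt hneg ε y c) : Matrix ↥s ↥s ℂ)) := by
    push_cast
    rfl
  have h2 : ((∑ c : ↥s, g c y • FgenElt hneg ε c x : ↥(gClassical s hneg ε)) :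
      Matrix ↥s ↥s ℂ) = ∑ c : ↥s, g c y • (Fbasis s hneg ε c x) := by
    push_cast
    rfl
  rw [h1, h2]
  rw [Finset.sum_congr rfl fun c _ => by rw [hθ]]
  exact hmat

include hneg hδ2 hδε hg hθ in
lemma coreU (x y : ↥s) :
    (∑ c : ↥s, g x c • (UniversalEnvelopingAlgebra.ι ℂ (θ (FgenElt hneg ε y c))))
      = ∑ c : ↥s, g c y • Fgen s hneg ε c x := by
  have h := core_sub hneg hδ2 hδε hg θ hθ x y
  set L : ↥(gClassical s hneg ε) →ₗ[ℂ] Ucl s hneg ε :=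
    (UniversalEnvelopingAlgebra.ι ℂ (L := ↥(gClassical s hneg ε))).toLinearMap with hL
  have hLa : ∀ X : ↥(gClassical s hneg ε), L X = UniversalEnvelopingAlgebra.ι ℂ X :=
    fun X => rfl
  calc (∑ c : ↥s, g x c • (UniversalEnvelopingAlgebra.ι ℂ (θ (FgenElt hneg ε y c))))
      = L (∑ c : ↥s, g x c • θ (FgenElt hneg ε y c)) := by
        rw [map_sum]
        exact Finset.sum_congr rfl fun c _ => ((map_smul L _ _).trans (by rw [hLa])).symm
    _ = L (∑ c : ↥s, g c y • FgenElt hneg ε c x) := by rw [h]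
    _ = ∑ c : ↥s, g c y • Fgen s hneg ε c x := by
        rw [map_sum]
        exact Finset.sum_congr rfl fun c _ => (map_smul L _ _).trans (by rw [hLa]; rfl)

end tensor


section bigtensor
variable {ε : ℤ → ℂ} {δ : ℂ} {g : Matrix ↥s ↥s ℂ}
variable (hneg : ∀ i ∈ s, -i ∈ s) (hδ2 : δ * δ = 1)
  (hδε : ∀ i ∈ s, ε i * ε (-i) = δ) (hg : gᵀ * Jform s ε * g = Jform s ε)
variable (n : ℕ)

/-- the `n`-fold tensor power of a matrix -/
noncomputable def tg (g : Matrix ↥s ↥s ℂ) : Matrix (Fin n → ↥s) (Fin n → ↥s) ℂ :=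
  fun a b => ∏ r, g (a r) (b r)

lemma tg_mul (g₁ g₂ : Matrix ↥s ↥s ℂ) : tg n g₁ * tg n g₂ = tg n (g₁ * g₂) := by
  ext a b
  rw [Matrix.mul_apply]
  show (∑ c : Fin n → ↥s, (∏ r, g₁ (a r) (c r)) * ∏ r, g₂ (c r) (b r)) = ∏ r, (g₁ * g₂) (a r) (b r)
  have h1 : ∀ c : Fin n → ↥s, (∏ r, g₁ (a r) (c r)) * ∏ r, g₂ (c r) (b r)
      = ∏ r, (g₁ (a r) (c r) * g₂ (c r) (b r)) := fun c => (Finset.prod_mul_distrib).symm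
  rw [Finset.sum_congr rfl fun c _ => h1 c]
  have h2 : (∏ r, (g₁ * g₂) (a r) (b r)) = ∏ r, ∑ x : ↥s, g₁ (a r) x * g₂ x (b r) :=
    Finset.prod_congr rfl fun r _ => Matrix.mul_apply
  rw [h2, Finset.prod_univ_sum, Fintype.piFinset_univ]

lemma tg_one : tg n (1 : Matrix ↥s ↥s ℂ) = 1 := by
  ext a b
  show (∏ r, (1 : Matrix ↥s ↥s ℂ) (a r) (b r)) = (1 : Matrix _ _ ℂ) a b
  rw [Matrix.one_apply]
  by_cases h : a = b
  · subst h; simp [Matrix.one_apply]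
  · rw [if_neg h]
    obtain ⟨r, hr⟩ : ∃ r, a r ≠ b r := by
      by_contra hc; push_neg at hc; exact h (funext hc)
    exact Finset.prod_eq_zero (Finset.mem_univ r) (by simp [Matrix.one_apply, hr])

lemma sum_fiber1 {M : Type*} [AddCommMonoid M] (p : Fin n) (b : Fin n → ↥s)
    (f : (Fin n → ↥s) → M) (hf : ∀ c, ¬ (∀ r, r ≠ p → c r = b r) → f c = 0) :
    ∑ c, f c = ∑ j : ↥s, f (Function.update b p j) := by
  classical
  have hinj : ∀ x ∈ (Finset.univ : Finset ↥s), ∀ y ∈ (Finset.univ : Finset ↥s),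
      Function.update b p x = Function.update b p y → x = y := by
    intro x _ y _ hxy
    have h := congrFun hxy p
    simpa using h
  rw [← Finset.sum_image hinj]
  refine (Finset.sum_subset (Finset.subset_univ _) ?_).symm
  intro c _ hc
  apply hf
  intro hcon
  apply hc
  rw [Finset.mem_image]
  refine ⟨c p, Finset.mem_univ _, ?_⟩
  funext r
  by_cases hr : r = p
  · subst hr; simp
  · rw [Function.update_of_ne hr]
    exact (hcon r hr).symm

lemma sum_fiber2 {M : Type*} [AddCommMonoid M] (q p : Fin n) (hqp : q ≠ p) (a : Fin n → ↥s)
    (f : (Fin n → ↥s) → M) (hf : ∀ c, ¬ (∀ r, r ≠ q → r ≠ p → c r = a r) → f c = 0) :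
    ∑ c, f c = ∑ jk : ↥s × ↥s, f (Function.update (Function.update a q jk.1) p jk.2) := by
  classical
  have hinj : ∀ x ∈ (Finset.univ : Finset (↥s × ↥s)), ∀ y ∈ (Finset.univ : Finset (↥s × ↥s)),
      Function.update (Function.update a q x.1) p x.2
        = Function.update (Function.update a q y.1) p y.2 → x = y := by
    intro x _ y _ hxy
    have h1 := congrFun hxy p
    have h2 := congrFun hxy q
    simp only [Function.update_self] at h1
    rw [Function.update_of_ne hqp, Function.update_of_ne hqp, Function.update_self,
      Function.update_self] at h2
    exact Prod.ext h2 h1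
  rw [← Finset.sum_image hinj]
  refine (Finset.sum_subset (Finset.subset_univ _) ?_).symm
  intro c _ hc
  apply hf
  intro hcon
  apply hc
  rw [Finset.mem_image]
  refine ⟨(c q, c p), Finset.mem_univ _, ?_⟩
  funext r
  by_cases hr : r = p
  · subst hr; simp
  · rw [Function.update_of_ne hr]
    by_cases hrq : r = q
    · subst hrq; simp
    · rw [Function.update_of_ne hrq]
      exact (hcon r hrq hr).symm

lemma prod_update1 (p : Fin n) (c : Fin n → ↥s) (j : ↥s) (f : Fin n → ↥s → ℂ) :
    (∏ r, f r (Function.update c p j r))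
      = f p j * ∏ r ∈ Finset.univ.erase p, f r (c r) := by
  rw [← Finset.mul_prod_erase Finset.univ (fun r => f r (Function.update c p j r))
    (Finset.mem_univ p)]
  congr 1
  · simp
  · refine Finset.prod_congr rfl fun r hr => ?_
    rw [Function.update_of_ne (Finset.mem_erase.mp hr).1]

lemma prod_update2 (q p : Fin n) (hqp : q ≠ p) (c : Fin n → ↥s) (j k : ↥s)
    (f : Fin n → ↥s → ℂ) :
    (∏ r, f r (Function.update (Function.update c q j) p k r))
      = f p k * (f q j * ∏ r ∈ (Finset.univ.erase p).erase q, f r (c r)) := by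
  rw [← Finset.mul_prod_erase Finset.univ
    (fun r => f r (Function.update (Function.update c q j) p k r)) (Finset.mem_univ p)]
  congr 1
  · simp
  rw [← Finset.mul_prod_erase (Finset.univ.erase p)
    (fun r => f r (Function.update (Function.update c q j) p k r))
    (Finset.mem_erase.mpr ⟨hqp, Finset.mem_univ q⟩)]
  congr 1
  · rw [Function.update_of_ne hqp, Function.update_self]
  · refine Finset.prod_congr rfl fun r hr => ?_
    have hrq := (Finset.mem_erase.mp hr).1
    have hrp := (Finset.mem_erase.mp (Finset.mem_erase.mp hr).2).1
    rw [Function.update_of_ne hrp, Function.update_of_ne hrq]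

/-- scalar version of `Qpos` -/
noncomputable def Qc (hneg : ∀ i ∈ s, -i ∈ s) (ε : ℤ → ℂ) (n : ℕ) (q p : Fin n) :
    Matrix (Fin n → ↥s) (Fin n → ↥s) ℂ :=
  fun a b =>
    if (∀ r, r ≠ q → r ≠ p → a r = b r) ∧
        ((a p : ℤ) = -((a q : ℤ))) ∧ ((b p : ℤ) = -((b q : ℤ))) then
      ε (a q) * ε (b q)
    else 0

lemma Qpos_eq (q p : Fin n) :
    Qpos s hneg ε n q p = (Qc hneg ε n q p).map (algebraMap ℂ (Ucl s hneg ε)) := by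
  ext a b
  simp only [Qpos, Qc, Matrix.map_apply]
  split_ifs <;> simp

end bigtensor


section qcomm
variable {ε : ℤ → ℂ} {δ : ℂ} {g : Matrix ↥s ↥s ℂ}
variable (hneg : ∀ i ∈ s, -i ∈ s) (hδ2 : δ * δ = 1)
  (hδε : ∀ i ∈ s, ε i * ε (-i) = δ) (hg : gᵀ * Jform s ε * g = Jform s ε)
variable (n : ℕ)

include hδ2 hδε hg in
lemma Qc_tg_entry (q p : Fin n) (hqp : q ≠ p) (a b : Fin n → ↥s) :
    (Qc hneg ε n q p * tg n g) a b
      = (if (a p : ℤ) = -((a q : ℤ)) then ε ((a q : ℤ)) else 0)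
        * ((if (b p : ℤ) = -((b q : ℤ)) then ε ((b q : ℤ)) else 0)
          * ∏ r ∈ (Finset.univ.erase p).erase q, g (a r) (b r)) := by
  rw [Matrix.mul_apply]
  rw [sum_fiber2 n q p hqp a _ (fun c hc => by
    show Qc hneg ε n q p a c * tg n g c b = 0
    simp only [Qc]
    rw [if_neg (fun hcon => hc fun r h1 h2 => (hcon.1 r h1 h2).symm), zero_mul])]
  set REST := ∏ r ∈ (Finset.univ.erase p).erase q, g (a r) (b r) with hREST
  have hterm : ∀ jk : ↥s × ↥s,
      Qc hneg ε n q p a (Function.update (Function.update a q jk.1) p jk.2)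
        * tg n g (Function.update (Function.update a q jk.1) p jk.2) b
      = if (a p : ℤ) = -((a q : ℤ)) then
          (if ((jk.2 : ℤ)) = -((jk.1 : ℤ)) then
            (ε ((a q : ℤ)) * ε ((jk.1 : ℤ)))
              * (g jk.2 (b p) * (g jk.1 (b q) * REST)) else 0) else 0 := by
    intro jk
    have hq' : Function.update (Function.update a q jk.1) p jk.2 q = jk.1 := by
      rw [Function.update_of_ne hqp, Function.update_self]
    have hp' : Function.update (Function.update a q jk.1) p jk.2 p = jk.2 :=
      Function.update_self _ _ _
    have hH : ∀ r, r ≠ q → r ≠ p →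
        a r = Function.update (Function.update a q jk.1) p jk.2 r := by
      intro r h1 h2; rw [Function.update_of_ne h2, Function.update_of_ne h1]
    have htg : tg n g (Function.update (Function.update a q jk.1) p jk.2) b
        = g jk.2 (b p) * (g jk.1 (b q) * REST) := by
      show (∏ r, (fun r x => g x (b r)) r (Function.update (Function.update a q jk.1) p jk.2 r))
          = _
      rw [prod_update2 n q p hqp a jk.1 jk.2 (fun r x => g x (b r))]
    rw [htg]
    simp only [Qc, hq', hp']
    by_cases hA : (a p : ℤ) = -((a q : ℤ))
    · by_cases hK : ((jk.2 : ℤ)) = -((jk.1 : ℤ))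
      · rw [if_pos ⟨hH, hA, hK⟩, if_pos hA, if_pos hK]
      · rw [if_neg (fun hcon => hK hcon.2.2), if_pos hA, if_neg hK, zero_mul]
    · rw [if_neg (fun hcon => hA hcon.2.1), if_neg hA, zero_mul]
  rw [Finset.sum_congr rfl fun jk _ => hterm jk]
  by_cases hA : (a p : ℤ) = -((a q : ℤ))
  · simp only [if_pos hA]
    rw [Fintype.sum_prod_type]
    rw [Finset.sum_congr rfl fun j _ => sum_delta hneg j
      (fun k => (ε ((a q : ℤ)) * ε ((j : ℤ))) * (g k (b p) * (g j (b q) * REST)))]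
    have h3 : ∀ j : ↥s, (ε ((a q : ℤ)) * ε ((j : ℤ)))
          * (g (nI hneg j) (b p) * (g j (b q) * REST))
        = (ε ((j : ℤ)) * g j (b q) * g (nI hneg j) (b p)) * (ε ((a q : ℤ)) * REST) :=
      fun j => by ring
    rw [Finset.sum_congr rfl fun j _ => h3 j, ← Finset.sum_mul,
      sumJ1 hneg hδ2 hδε hg (b q) (b p)]
    ring
  · simp [hA]

include hδ2 hδε hg in
lemma tg_Qc_entry (q p : Fin n) (hqp : q ≠ p) (a b : Fin n → ↥s) :
    (tg n g * Qc hneg ε n q p) a b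
      = (if (a p : ℤ) = -((a q : ℤ)) then ε ((a q : ℤ)) else 0)
        * ((if (b p : ℤ) = -((b q : ℤ)) then ε ((b q : ℤ)) else 0)
          * ∏ r ∈ (Finset.univ.erase p).erase q, g (a r) (b r)) := by
  rw [Matrix.mul_apply]
  rw [sum_fiber2 n q p hqp b _ (fun c hc => by
    show tg n g a c * Qc hneg ε n q p c b = 0
    simp only [Qc]
    rw [if_neg (fun hcon => hc hcon.1), mul_zero])]
  set REST := ∏ r ∈ (Finset.univ.erase p).erase q, g (a r) (b r) with hREST
  have hterm : ∀ jk : ↥s × ↥s,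
      tg n g a (Function.update (Function.update b q jk.1) p jk.2)
        * Qc hneg ε n q p (Function.update (Function.update b q jk.1) p jk.2) b
      = if (b p : ℤ) = -((b q : ℤ)) then
          (if ((jk.2 : ℤ)) = -((jk.1 : ℤ)) then
            (g (a p) jk.2 * (g (a q) jk.1 * REST)) * (ε ((jk.1 : ℤ)) * ε ((b q : ℤ)))
          else 0) else 0 := by
    intro jk
    have hq' : Function.update (Function.update b q jk.1) p jk.2 q = jk.1 := by
      rw [Function.update_of_ne hqp, Function.update_self]
    have hp' : Function.update (Function.update b q jk.1) p jk.2 p = jk.2 :=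
      Function.update_self _ _ _
    have hH : ∀ r, r ≠ q → r ≠ p →
        Function.update (Function.update b q jk.1) p jk.2 r = b r := by
      intro r h1 h2; rw [Function.update_of_ne h2, Function.update_of_ne h1]
    have htg : tg n g a (Function.update (Function.update b q jk.1) p jk.2)
        = g (a p) jk.2 * (g (a q) jk.1 * REST) := by
      show (∏ r, (fun r x => g (a r) x) r (Function.update (Function.update b q jk.1) p jk.2 r))
          = _
      rw [prod_update2 n q p hqp b jk.1 jk.2 (fun r x => g (a r) x)]
    rw [htg]
    simp only [Qc, hq', hp']
    by_cases hB : (b p : ℤ) = -((b q : ℤ))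
    · by_cases hK : ((jk.2 : ℤ)) = -((jk.1 : ℤ))
      · rw [if_pos ⟨hH, hK, hB⟩, if_pos hB, if_pos hK]
      · rw [if_neg (fun hcon => hK hcon.2.1), if_pos hB, if_neg hK, mul_zero]
    · rw [if_neg (fun hcon => hB hcon.2.2), if_neg hB, mul_zero]
  rw [Finset.sum_congr rfl fun jk _ => hterm jk]
  by_cases hB : (b p : ℤ) = -((b q : ℤ))
  · simp only [if_pos hB]
    rw [Fintype.sum_prod_type]
    rw [Finset.sum_congr rfl fun j _ => sum_delta hneg j
      (fun k => (g (a p) k * (g (a q) j * REST)) * (ε ((j : ℤ)) * ε ((b q : ℤ))))]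
    have h3 : ∀ j : ↥s, (g (a p) (nI hneg j) * (g (a q) j * REST))
          * (ε ((j : ℤ)) * ε ((b q : ℤ)))
        = (g (a q) j * ε ((j : ℤ)) * g (a p) (nI hneg j)) * (ε ((b q : ℤ)) * REST) :=
      fun j => by ring
    rw [Finset.sum_congr rfl fun j _ => h3 j, ← Finset.sum_mul,
      sumJ2 hneg hδ2 hδε hg (a q) (a p)]
    try ring
  · simp [hB]

include hδ2 hδε hg in
lemma Qc_comm (q p : Fin n) (hqp : q ≠ p) :
    Qc hneg ε n q p * tg n g = tg n g * Qc hneg ε n q p := by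
  ext a b
  rw [Qc_tg_entry hneg hδ2 hδε hg n q p hqp a b, tg_Qc_entry hneg hδ2 hδε hg n q p hqp a b]

lemma perm_comm (σ : Equiv.Perm (Fin n)) :
    permTensorMatrix s n σ * tg n g = tg n g * permTensorMatrix s n σ := by
  ext a b
  rw [Matrix.mul_apply, Matrix.mul_apply]
  have hL : ∀ c, permTensorMatrix s n σ a c * tg n g c b
      = if c = a ∘ σ then tg n g c b else 0 := by
    intro c; simp only [permTensorMatrix]; split_ifs <;> simp
  have hR : ∀ c, tg n g a c * permTensorMatrix s n σ c b
      = if c = b ∘ ⇑σ⁻¹ then tg n g a c else 0 := by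
    intro c
    simp only [permTensorMatrix]
    have hiff : (b = c ∘ ⇑σ) ↔ (c = b ∘ ⇑σ⁻¹) := by
      constructor
      · intro h; funext r
        have := congrFun h (σ⁻¹ r)
        simp only [Function.comp_apply, Equiv.Perm.inv_def, Equiv.apply_symm_apply] at this ⊢
        exact this.symm
      · intro h; funext r
        have := congrFun h (σ r)
        simp only [Function.comp_apply, Equiv.Perm.inv_def, Equiv.symm_apply_apply] at this ⊢
        exact this.symm
    rw [mul_ite, mul_one, mul_zero, if_congr hiff rfl rfl]
  rw [Finset.sum_congr rfl fun c _ => hL c, Finset.sum_congr rfl fun c _ => hR c,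
    Finset.sum_ite_eq' Finset.univ (a ∘ ⇑σ) (fun c => tg n g c b),
    Finset.sum_ite_eq' Finset.univ (b ∘ ⇑σ⁻¹) (fun c => tg n g a c)]
  simp only [Finset.mem_univ, if_true]
  show (∏ r, g (a (σ r)) (b r)) = ∏ r, g (a r) (b (σ⁻¹ r))
  rw [← Equiv.prod_comp σ (fun r => g (a r) (b (σ⁻¹ r)))]
  exact Finset.prod_congr rfl fun r _ => by simp

lemma young_comm {W : Type} [NormedAddCommGroup W] [InnerProductSpace ℂ W]
    [FiniteDimensional ℂ W] (ρ : Representation ℂ (Equiv.Perm (Fin n)) W) (w : W) :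
    youngProjector s n ρ w * tg n g = tg n g * youngProjector s n ρ w := by
  unfold youngProjector
  rw [Matrix.smul_mul, Matrix.mul_smul, Finset.sum_mul, Finset.mul_sum]
  congr 1
  refine Finset.sum_congr rfl fun σ _ => ?_
  rw [Matrix.smul_mul, Matrix.mul_smul, perm_comm]

end qcomm


section rlevel
variable {ε : ℤ → ℂ} {δ : ℂ} {g : Matrix ↥s ↥s ℂ}
variable (hneg : ∀ i ∈ s, -i ∈ s) (hδ2 : δ * δ = 1)
  (hδε : ∀ i ∈ s, ε i * ε (-i) = δ) (hg : gᵀ * Jform s ε * g = Jform s ε)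
variable (θ : ↥(gClassical s hneg ε) →ₗ⁅ℂ⁆ ↥(gClassical s hneg ε))
variable (hθ : ∀ X : ↥(gClassical s hneg ε),
      ((θ X : Matrix ↥s ↥s ℂ)) = g * (X : Matrix ↥s ↥s ℂ) * g⁻¹)
variable (n : ℕ)

lemma phi_Fgen (i j : ↥s) :
    (UniversalEnvelopingAlgebra.lift ℂ ((UniversalEnvelopingAlgebra.ι ℂ).comp θ))
        (Fgen s hneg ε i j)
      = UniversalEnvelopingAlgebra.ι ℂ (θ (FgenElt hneg ε i j)) := by
  show (UniversalEnvelopingAlgebra.lift ℂ ((UniversalEnvelopingAlgebra.ι ℂ).comp θ))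
      (UniversalEnvelopingAlgebra.ι ℂ (FgenElt hneg ε i j)) = _
  rw [UniversalEnvelopingAlgebra.lift_ι_apply]
  rfl

/-- The generator part of `F_p(v)`. -/
noncomputable def FbigM (hneg : ∀ i ∈ s, -i ∈ s) (ε : ℤ → ℂ) (n : ℕ) (p : Fin n) :
    Matrix (Fin n → ↥s) (Fin n → ↥s) (Ucl s hneg ε) :=
  fun a b => if ∀ r, r ≠ p → a r = b r then Fgen s hneg ε (b p) (a p) else 0

lemma Fpos_split (η : ℂ) (p : Fin n) (v : ℂ) :
    Fpos s hneg ε η n p v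
      = FbigM hneg ε n p - (v + η) • (1 : Matrix (Fin n → ↥s) (Fin n → ↥s) (Ucl s hneg ε)) := by
  ext a b
  simp only [Fpos, FbigM, Matrix.sub_apply, Matrix.smul_apply, Matrix.one_apply]
  by_cases h : ∀ r, r ≠ p → a r = b r
  · rw [if_pos h, if_pos h]
    by_cases h2 : a p = b p
    · have hab : a = b := funext fun r => by
        by_cases hr : r = p
        · subst hr; exact h2
        · exact h r hr
      rw [if_pos h2, if_pos hab, Algebra.algebraMap_eq_smul_one]
    · have hab : ¬ a = b := fun hc => h2 (congrFun hc p)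
      rw [if_neg h2, if_neg hab]
      simp
  · have hab : ¬ a = b := fun hc => h (fun r _ => congrFun hc r)
    rw [if_neg h, if_neg h, if_neg hab]
    simp

include hδ2 hδε hg hθ in
lemma F_comm_big (p : Fin n) :
    ((tg n g).map (algebraMap ℂ (Ucl s hneg ε)))
        * ((FbigM hneg ε n p).map
            (UniversalEnvelopingAlgebra.lift ℂ ((UniversalEnvelopingAlgebra.ι ℂ).comp θ)))
      = FbigM hneg ε n p * ((tg n g).map (algebraMap ℂ (Ucl s hneg ε))) := by
  set φ := UniversalEnvelopingAlgebra.lift ℂ ((UniversalEnvelopingAlgebra.ι ℂ).comp θ) with hφ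
  ext a b
  rw [Matrix.mul_apply, Matrix.mul_apply]
  set REST := ∏ r ∈ Finset.univ.erase p, g (a r) (b r) with hREST
  have hL : ∀ c, ((tg n g).map (algebraMap ℂ (Ucl s hneg ε))) a c * (FbigM hneg ε n p).map φ c b
      = if ∀ r, r ≠ p → c r = b r then
          (∏ r, g (a r) (c r)) • (UniversalEnvelopingAlgebra.ι ℂ (θ (FgenElt hneg ε (b p) (c p))))
        else 0 := by
    intro c
    simp only [Matrix.map_apply, FbigM]
    split_ifs with h
    · rw [phi_Fgen hneg θ (b p) (c p), ← Algebra.smul_def]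
      rfl
    · rw [map_zero, mul_zero]
  have hR : ∀ c, FbigM hneg ε n p a c * ((tg n g).map (algebraMap ℂ (Ucl s hneg ε))) c b
      = if ∀ r, r ≠ p → c r = a r then
          (∏ r, g (c r) (b r)) • (Fgen s hneg ε (c p) (a p))
        else 0 := by
    intro c
    simp only [Matrix.map_apply, FbigM]
    by_cases h : ∀ r, r ≠ p → a r = c r
    · rw [if_pos h, if_pos (fun r hr => (h r hr).symm), ← Algebra.commutes, ← Algebra.smul_def]
      rfl
    · rw [if_neg h, if_neg (fun hcon => h (fun r hr => (hcon r hr).symm)), zero_mul]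
  rw [Finset.sum_congr rfl fun c _ => hL c, Finset.sum_congr rfl fun c _ => hR c]
  rw [sum_fiber1 n p b _ (fun c hc => by rw [if_neg hc])]
  rw [sum_fiber1 n p a _ (fun c hc => by rw [if_neg hc])]
  have hLj : ∀ j : ↥s,
      (if ∀ r, r ≠ p → Function.update b p j r = b r then
        (∏ r, g (a r) (Function.update b p j r)) •
          (UniversalEnvelopingAlgebra.ι ℂ (θ (FgenElt hneg ε (b p) (Function.update b p j p))))
      else 0)
      = REST • (g (a p) j • (UniversalEnvelopingAlgebra.ι ℂ (θ (FgenElt hneg ε (b p) j)))) := by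
    intro j
    rw [if_pos (fun r hr => Function.update_of_ne hr _ _), Function.update_self]
    have hprod : (∏ r, g (a r) (Function.update b p j r)) = g (a p) j * REST := by
      show (∏ r, (fun r x => g (a r) x) r (Function.update b p j r)) = _
      rw [prod_update1 n p b j (fun r x => g (a r) x)]
    rw [hprod, mul_comm, mul_smul]
  have hRj : ∀ j : ↥s,
      (if ∀ r, r ≠ p → Function.update a p j r = a r then
        (∏ r, g (Function.update a p j r) (b r)) • (Fgen s hneg ε (Function.update a p j p) (a p))
      else 0)
      = REST • (g j (b p) • (Fgen s hneg ε j (a p))) := by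
    intro j
    rw [if_pos (fun r hr => Function.update_of_ne hr _ _), Function.update_self]
    have hprod : (∏ r, g (Function.update a p j r) (b r)) = g j (b p) * REST := by
      show (∏ r, (fun r x => g x (b r)) r (Function.update a p j r)) = _
      rw [prod_update1 n p a j (fun r x => g x (b r))]
    rw [hprod, mul_comm, mul_smul]
  rw [Finset.sum_congr rfl fun j _ => hLj j, Finset.sum_congr rfl fun j _ => hRj j,
    ← Finset.smul_sum, ← Finset.smul_sum, coreU hneg hδ2 hδε hg θ hθ (a p) (b p)]

end rlevel


section glue
variable {ε : ℤ → ℂ} {δ : ℂ} {g : Matrix ↥s ↥s ℂ}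
variable (hneg : ∀ i ∈ s, -i ∈ s) (hδ2 : δ * δ = 1)
  (hδε : ∀ i ∈ s, ε i * ε (-i) = δ) (hg : gᵀ * Jform s ε * g = Jform s ε)
variable (θ : ↥(gClassical s hneg ε) →ₗ⁅ℂ⁆ ↥(gClassical s hneg ε))
variable (hθ : ∀ X : ↥(gClassical s hneg ε),
      ((θ X : Matrix ↥s ↥s ℂ)) = g * (X : Matrix ↥s ↥s ℂ) * g⁻¹)
variable (n : ℕ)

lemma map_one_phi :
    ((1 : Matrix (Fin n → ↥s) (Fin n → ↥s) (Ucl s hneg ε)).map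
      (UniversalEnvelopingAlgebra.lift ℂ ((UniversalEnvelopingAlgebra.ι ℂ).comp θ))) = 1 := by
  ext a b
  simp only [Matrix.map_apply, Matrix.one_apply]
  split_ifs <;> simp

lemma map_mul_phi (X Y : Matrix (Fin n → ↥s) (Fin n → ↥s) (Ucl s hneg ε)) :
    ((X * Y).map (UniversalEnvelopingAlgebra.lift ℂ ((UniversalEnvelopingAlgebra.ι ℂ).comp θ)))
      = X.map (UniversalEnvelopingAlgebra.lift ℂ ((UniversalEnvelopingAlgebra.ι ℂ).comp θ))
        * Y.map (UniversalEnvelopingAlgebra.lift ℂ ((UniversalEnvelopingAlgebra.ι ℂ).comp θ)) := by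
  simpa [RingHom.mapMatrix_apply] using
    map_mul ((AlgHom.toRingHom (UniversalEnvelopingAlgebra.lift ℂ
      ((UniversalEnvelopingAlgebra.ι ℂ).comp θ))).mapMatrix (m := Fin n → ↥s)) X Y

lemma map_mul_alg (X Y : Matrix (Fin n → ↥s) (Fin n → ↥s) ℂ) :
    ((X * Y).map (algebraMap ℂ (Ucl s hneg ε)))
      = X.map (algebraMap ℂ (Ucl s hneg ε)) * Y.map (algebraMap ℂ (Ucl s hneg ε)) := by
  simpa [RingHom.mapMatrix_apply] using
    map_mul ((algebraMap ℂ (Ucl s hneg ε)).mapMatrix (m := Fin n → ↥s)) X Y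

lemma map_one_alg :
    ((1 : Matrix (Fin n → ↥s) (Fin n → ↥s) ℂ).map (algebraMap ℂ (Ucl s hneg ε))) = 1 := by
  simpa [RingHom.mapMatrix_apply] using
    map_one ((algebraMap ℂ (Ucl s hneg ε)).mapMatrix (m := Fin n → ↥s))

lemma map_scalar_phi (A : Matrix (Fin n → ↥s) (Fin n → ↥s) ℂ) :
    ((A.map (algebraMap ℂ (Ucl s hneg ε))).map
        (UniversalEnvelopingAlgebra.lift ℂ ((UniversalEnvelopingAlgebra.ι ℂ).comp θ)))
      = A.map (algebraMap ℂ (Ucl s hneg ε)) := by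
  ext a b
  simp only [Matrix.map_apply]
  exact AlgHom.commutes _ _

include hδ2 hδε hg hθ in
lemma F_comm (η : ℂ) (p : Fin n) (v : ℂ) :
    ((tg n g).map (algebraMap ℂ (Ucl s hneg ε)))
        * ((Fpos s hneg ε η n p v).map
            (UniversalEnvelopingAlgebra.lift ℂ ((UniversalEnvelopingAlgebra.ι ℂ).comp θ)))
      = Fpos s hneg ε η n p v * ((tg n g).map (algebraMap ℂ (Ucl s hneg ε))) := by
  set φ := UniversalEnvelopingAlgebra.lift ℂ ((UniversalEnvelopingAlgebra.ι ℂ).comp θ) with hφ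
  rw [Fpos_split hneg n η p v]
  have hmap : ((FbigM hneg ε n p
        - (v + η) • (1 : Matrix (Fin n → ↥s) (Fin n → ↥s) (Ucl s hneg ε))).map φ)
      = (FbigM hneg ε n p).map φ - (v + η) • 1 := by
    ext a b
    simp only [Matrix.map_apply, Matrix.sub_apply, Matrix.smul_apply, map_sub,
      _root_.map_smul, Matrix.one_apply]
    congr 1
    split_ifs <;> simp
  rw [hmap, Matrix.mul_sub, Matrix.sub_mul, F_comm_big hneg hδ2 hδε hg θ hθ n p,
    Matrix.mul_smul, Matrix.smul_mul, Matrix.mul_one, Matrix.one_mul]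

/-- scalar version of the `1 + (2u+c)⁻¹ Σ Q` factor. -/
noncomputable def Cc (hneg : ∀ i ∈ s, -i ∈ s) (ε : ℤ → ℂ) (n : ℕ) (x : ℂ) (p : Fin n) :
    Matrix (Fin n → ↥s) (Fin n → ↥s) ℂ :=
  1 + x • ∑ q ∈ Finset.univ.filter (fun q => q < p), Qc hneg ε n q p

lemma Cp_eq (x : ℂ) (p : Fin n) :
    (1 : Matrix (Fin n → ↥s) (Fin n → ↥s) (Ucl s hneg ε))
        + x • ∑ q ∈ Finset.univ.filter (fun q => q < p), Qpos s hneg ε n q p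
      = (Cc hneg ε n x p).map (algebraMap ℂ (Ucl s hneg ε)) := by
  ext a b
  simp only [Cc, Matrix.map_apply, Matrix.add_apply, Matrix.smul_apply, Matrix.sum_apply,
    Matrix.one_apply, map_add]
  congr 1
  · split_ifs <;> simp
  · rw [smul_eq_mul (α := ℂ), (algebraMap ℂ (Ucl s hneg ε)).map_mul, ← Algebra.smul_def,
      map_sum (algebraMap ℂ (Ucl s hneg ε))]
    congr 1
    exact Finset.sum_congr rfl fun q _ => by rw [Qpos_eq hneg n q p, Matrix.map_apply]

include hδ2 hδε hg in
lemma Cc_tg_comm (x : ℂ) (p : Fin n) :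
    Cc hneg ε n x p * tg n g = tg n g * Cc hneg ε n x p := by
  simp only [Cc, Matrix.add_mul, Matrix.mul_add, Matrix.one_mul, Matrix.mul_one,
    Matrix.smul_mul, Matrix.mul_smul, Finset.sum_mul, Finset.mul_sum]
  congr 2
  refine Finset.sum_congr rfl fun q hq => ?_
  have hqp : q ≠ p := ne_of_lt (Finset.mem_filter.mp hq).2
  exact Qc_comm hneg hδ2 hδε hg n q p hqp

lemma trace_central {m : Type*} [Fintype m] [DecidableEq m]
    (A : Matrix m m ℂ) (B : Matrix m m (Ucl s hneg ε)) :
    (A.map (algebraMap ℂ (Ucl s hneg ε)) * B).trace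
      = (B * A.map (algebraMap ℂ (Ucl s hneg ε))).trace := by
  simp only [Matrix.trace, Matrix.diag, Matrix.mul_apply, Matrix.map_apply]
  rw [Finset.sum_comm]
  exact Finset.sum_congr rfl fun c _ => Finset.sum_congr rfl fun a _ => Algebra.commutes _ _

lemma trace_map_phi (M : Matrix (Fin n → ↥s) (Fin n → ↥s) (Ucl s hneg ε)) :
    (UniversalEnvelopingAlgebra.lift ℂ ((UniversalEnvelopingAlgebra.ι ℂ).comp θ)) M.trace
      = (M.map (UniversalEnvelopingAlgebra.lift ℂ
          ((UniversalEnvelopingAlgebra.ι ℂ).comp θ))).trace := by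
  simp only [Matrix.trace, Matrix.diag, map_sum, Matrix.map_apply]

end glue

end ZAux

/-- **`Z_ν(u)` takes values in the ring `Z(g)` of `G`-invariants** (Proposition 2.5):
for every element `g` of the classical group `G = O_N, Sp_N` and every Lie algebra
automorphism `θ` of `g` induced by conjugation by `g`, the induced automorphism of
`U(g)` fixes `Z_ν(u)`. -/
theorem Znu_adjoint_invariant (M : ℕ) (s : Finset ℤ) (ε : ℤ → ℂ) (η : ℂ)
    (hcase :
      (s = Finset.Icc (-(M : ℤ)) M ∧ ε = (fun _ => 1) ∧ η = 1/2) ∨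
      (s = (Finset.Icc (-(M : ℤ)) M).erase 0 ∧ ε = (fun _ => 1) ∧ η = 1/2) ∨
      (s = (Finset.Icc (-(M : ℤ)) M).erase 0 ∧ ε = (fun i => (i.sign : ℂ)) ∧ η = -(1/2)))
    (hneg : ∀ i ∈ s, -i ∈ s)
    (n : ℕ) (T : StdTableau n) (hrows : ∀ p, (T.pos p).1 < s.card)
    (W : Type) [NormedAddCommGroup W] [InnerProductSpace ℂ W] [FiniteDimensional ℂ W]
    (ρ : Representation ℂ (Equiv.Perm (Fin n)) W)
    (hirr : ∀ U : Submodule ℂ W, (∀ σ : Equiv.Perm (Fin n), ∀ x ∈ U, ρ σ x ∈ U) →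
      U = ⊥ ∨ U = ⊤)
    (hinv : ∀ σ : Equiv.Perm (Fin n), ∀ x y : W,
      (inner ℂ (ρ σ x) (ρ σ y) : ℂ) = inner ℂ x y)
    (w : W) (hw : IsYoungVector T ρ w) (hnorm : (inner ℂ w w : ℂ) = 1)
    (g : Matrix ↥s ↥s ℂ) (hg : gᵀ * Jform s ε * g = Jform s ε)
    (θ : ↥(gClassical s hneg ε) →ₗ⁅ℂ⁆ ↥(gClassical s hneg ε))
    (hθ : ∀ X : ↥(gClassical s hneg ε),
      ((θ X : Matrix ↥s ↥s ℂ)) = g * (X : Matrix ↥s ↥s ℂ) * g⁻¹)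
    (u : ℂ) (hu : ∀ p : Fin n, 2 * u + (T.content p : ℂ) ≠ 0) :
    (UniversalEnvelopingAlgebra.lift ℂ ((UniversalEnvelopingAlgebra.ι ℂ).comp θ))
        (Znu s hneg ε η n T ρ w u) =
      Znu s hneg ε η n T ρ w u := by
  classical
  have hδex : ∃ δ : ℂ, δ * δ = 1 ∧ ∀ i ∈ s, ε i * ε (-i) = δ := by
    rcases hcase with ⟨hs, hε, -⟩ | ⟨hs, hε, -⟩ | ⟨hs, hε, -⟩
    · exact ⟨1, by norm_num, fun i _ => by rw [hε]; norm_num⟩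
    · exact ⟨1, by norm_num, fun i _ => by rw [hε]; norm_num⟩
    · refine ⟨-1, by norm_num, fun i hi => ?_⟩
      have hi0 : i ≠ 0 := by
        rw [hs] at hi
        exact (Finset.mem_erase.mp hi).1
      rw [hε]
      show ((i.sign : ℂ)) * (((-i).sign : ℂ)) = -1
      rcases lt_or_gt_of_ne hi0 with h | h
      · rw [Int.sign_eq_neg_one_of_neg h, Int.sign_eq_one_of_pos (by omega : (0:ℤ) < -i)]
        norm_num
      · rw [Int.sign_eq_one_of_pos h, Int.sign_eq_neg_one_of_neg (by omega : -i < 0)]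
        norm_num
  obtain ⟨δ, hδ2, hδε⟩ := hδex
  set φ := UniversalEnvelopingAlgebra.lift ℂ ((UniversalEnvelopingAlgebra.ι ℂ).comp θ) with hφ
  set G := (ZAux.tg n g).map (algebraMap ℂ (Ucl s hneg ε)) with hGdef
  set G' := (ZAux.tg n g⁻¹).map (algebraMap ℂ (Ucl s hneg ε)) with hG'def
  have hGG' : G * G' = 1 := by
    rw [hGdef, hG'def, ← ZAux.map_mul_alg hneg n, ZAux.tg_mul,
      ZAux.mul_ginv hneg hδ2 hδε hg, ZAux.tg_one, ZAux.map_one_alg hneg n]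
  have hG'G : G' * G = 1 := by
    rw [hGdef, hG'def, ← ZAux.map_mul_alg hneg n, ZAux.tg_mul,
      ZAux.ginv_mul hneg hδ2 hδε hg, ZAux.tg_one, ZAux.map_one_alg hneg n]
  set Mf : Fin n → Matrix (Fin n → ↥s) (Fin n → ↥s) (Ucl s hneg ε) := fun p =>
    ((1 : Matrix (Fin n → ↥s) (Fin n → ↥s) (Ucl s hneg ε)) +
        (2 * u + (T.content p : ℂ))⁻¹ •
          ∑ q ∈ Finset.univ.filter (fun q => q < p), Qpos s hneg ε n q p) *
      Fpos s hneg ε η n p (u + (T.content p : ℂ)) with hMf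
  have hfac : ∀ p : Fin n, G * ((Mf p).map φ) = Mf p * G := by
    intro p
    have hC := ZAux.Cp_eq (ε := ε) hneg n (2 * u + (T.content p : ℂ))⁻¹ p
    have hCG : (ZAux.Cc hneg ε n (2 * u + (T.content p : ℂ))⁻¹ p).map
          (algebraMap ℂ (Ucl s hneg ε)) * G
        = G * (ZAux.Cc hneg ε n (2 * u + (T.content p : ℂ))⁻¹ p).map
          (algebraMap ℂ (Ucl s hneg ε)) := by
      rw [hGdef, ← ZAux.map_mul_alg hneg n, ← ZAux.map_mul_alg hneg n,
        ZAux.Cc_tg_comm hneg hδ2 hδε hg n]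
    have hF := ZAux.F_comm hneg hδ2 hδε hg θ hθ n η p (u + (T.content p : ℂ))
    rw [hMf]
    simp only
    rw [hC, ZAux.map_mul_phi hneg θ n, ZAux.map_scalar_phi hneg θ n]
    rw [← Matrix.mul_assoc, ← hCG, Matrix.mul_assoc, hF, ← Matrix.mul_assoc]
  have hlist : ∀ l : List (Fin n),
      G * (((l.map Mf).prod).map φ) = (l.map Mf).prod * G := by
    intro l
    induction l with
    | nil =>
      simp only [List.map_nil, List.prod_nil]
      rw [ZAux.map_one_phi hneg θ n, Matrix.mul_one, Matrix.one_mul]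
    | cons p l ih =>
      simp only [List.map_cons, List.prod_cons]
      rw [ZAux.map_mul_phi hneg θ n, ← Matrix.mul_assoc, hfac p, Matrix.mul_assoc, ih,
        ← Matrix.mul_assoc]
  set Ym := (youngProjector s n ρ w).map (algebraMap ℂ (Ucl s hneg ε)) with hYm
  have hYG : Ym * G = G * Ym := by
    rw [hYm, hGdef, ← ZAux.map_mul_alg hneg n, ← ZAux.map_mul_alg hneg n,
      ZAux.young_comm n ρ w]
  have hYφ : Ym.map φ = Ym := ZAux.map_scalar_phi hneg θ n _
  have hFT : FT s hneg ε η n T ρ w u = Ym * ((List.finRange n).map Mf).prod := rfl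
  have hcomm : G * ((FT s hneg ε η n T ρ w u).map φ) = FT s hneg ε η n T ρ w u * G := by
    rw [hFT, ZAux.map_mul_phi hneg θ n, hYφ, ← Matrix.mul_assoc, ← hYG, Matrix.mul_assoc,
      hlist, ← Matrix.mul_assoc]
  have hφFT : (FT s hneg ε η n T ρ w u).map φ = G' * (FT s hneg ε η n T ρ w u * G) := by
    calc (FT s hneg ε η n T ρ w u).map φ
        = (G' * G) * (FT s hneg ε η n T ρ w u).map φ := by rw [hG'G, Matrix.one_mul]
      _ = G' * (G * (FT s hneg ε η n T ρ w u).map φ) := Matrix.mul_assoc _ _ _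
      _ = G' * (FT s hneg ε η n T ρ w u * G) := by rw [hcomm]
  show φ (Matrix.trace (FT s hneg ε η n T ρ w u)) = Matrix.trace (FT s hneg ε η n T ρ w u)
  rw [ZAux.trace_map_phi hneg θ n, hφFT, hG'def, ZAux.trace_central hneg,
    Matrix.mul_assoc, ← hG'def, hGG', Matrix.mul_one]
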